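/- All n! permutations of n elements can be produced from the identity by a sequence of n! - 1 transpositions; formally, for n ≥ 1 there exists a sequence of n! transpositions-prefixes: a list of n! permutations of Fin n, starting with the identity, containing every permutation exactly once, in which consecutive entries differ by a transposition. -/

import Mathlib

open Nat Equiv

namespace PermGrayAux

variable {n : ℕ}

/-- Embedding of `Perm (Fin n)` into `Perm (Fin (n+1))` fixing the last element. -/
def emb (σ : Perm (Fin n)) : Perm (Fin (n + 1)) :=
  Equiv.permCongr finSuccEquivLast.symm σ.optionCongr

lemma emb_castSucc (σ : Perm (Fin n)) (i : Fin n) :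
    emb σ i.castSucc = (σ i).castSucc := by
  simp [emb]

lemma emb_last (σ : Perm (Fin n)) : emb σ (Fin.last n) = Fin.last n := by
  simp [emb]

lemma emb_one : emb (1 : Perm (Fin n)) = 1 := by
  ext x
  induction x using Fin.lastCases with
  | last => simp [emb_last]
  | cast i => simp [emb_castSucc]

lemma emb_mul (a b : Perm (Fin n)) : emb (a * b) = emb a * emb b := by
  ext x
  induction x using Fin.lastCases with
  | last => simp [emb_last, Perm.mul_apply]
  | cast i => simp [emb_castSucc, Perm.mul_apply]

lemma emb_injective : Function.Injective (emb (n := n)) := by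
  intro a b h
  ext i
  have h2 := Equiv.ext_iff.mp h i.castSucc
  rw [emb_castSucc, emb_castSucc] at h2
  exact congrArg Fin.val (Fin.castSucc_injective n h2)

lemma emb_swap (a b : Fin n) : emb (swap a b) = swap a.castSucc b.castSucc := by
  ext x
  induction x using Fin.lastCases with
  | last =>
    rw [emb_last, swap_apply_of_ne_of_ne (Fin.castSucc_lt_last a).ne' (Fin.castSucc_lt_last b).ne']
  | cast i =>
    rcases eq_or_ne i a with rfl | ha
    · simp [emb_castSucc]
    rcases eq_or_ne i b with rfl | hb
    · simp [emb_castSucc]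
    rw [emb_castSucc, swap_apply_of_ne_of_ne ha hb,
      swap_apply_of_ne_of_ne ((Fin.castSucc_injective n).ne ha)
        ((Fin.castSucc_injective n).ne hb)]

lemma emb_isSwap {t : Perm (Fin n)} (ht : t.IsSwap) : (emb t).IsSwap := by
  obtain ⟨x, y, hxy, rfl⟩ := ht
  exact ⟨x.castSucc, y.castSucc, (Fin.castSucc_injective n).ne hxy, emb_swap x y⟩

lemma emb_surj (τ : Perm (Fin (n + 1))) (hτ : τ (Fin.last n) = Fin.last n) :
    ∃ σ : Perm (Fin n), emb σ = τ := by
  set π : Perm (Option (Fin n)) := Equiv.permCongr finSuccEquivLast τ with hπ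
  have hnone : π none = none := by simp [hπ, hτ]
  refine ⟨removeNone π, ?_⟩
  have h1 : (removeNone π).optionCongr = π := by
    rw [map_equiv_removeNone, hnone]
    simp
    rfl
  rw [emb, h1, hπ, ← Equiv.permCongr_symm]
  exact finSuccEquivLast.permCongr.symm_apply_apply τ

/-- coset representative positions -/
def v (n i : ℕ) : Fin (n + 1) := ⟨n - i, by omega⟩

/-- coset representatives -/
def r (n : ℕ) : ℕ → Perm (Fin (n + 1))
  | 0 => 1
  | i + 1 => r n i * swap (v n (i + 1)) (v n i)

lemma r_inv_last (i : ℕ) : (r n i)⁻¹ (Fin.last n) = v n i := by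
  induction i with
  | zero => simp [r, v, Fin.last]
  | succ i ih =>
    rw [r, mul_inv_rev, Perm.mul_apply, swap_inv, ih, swap_apply_right]

lemma aux : ∀ n : ℕ, ∃ L : List (Equiv.Perm (Fin n)),
      L.length = n ! ∧
      L.head? = some 1 ∧
      L.Nodup ∧
      (∀ σ : Equiv.Perm (Fin n), σ ∈ L) ∧
      L.Chain' (fun a b => ∃ t : Equiv.Perm (Fin n), t.IsSwap ∧ b = t * a) := by
  intro n
  induction n with
  | zero =>
    refine ⟨[1], by simp, by simp, by simp, fun σ => ?_, List.isChain_singleton _⟩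
    have : σ = 1 := Equiv.ext fun x => x.elim0
    simp [this]
  | succ n ih =>
    obtain ⟨L, hlen, hhead, hnodup, hmem, hchain⟩ := ih
    have hLne : L ≠ [] := by
      intro h; rw [h] at hlen; exact (Nat.factorial_pos n).ne (by simpa using hlen)
    set f : ℕ → Perm (Fin n) → Perm (Fin (n + 1)) := fun i h => emb h * r n i with hf
    set M : ℕ → List (Perm (Fin n)) := fun i => if i % 2 = 0 then L else L.reverse with hM
    have hMne : ∀ i, M i ≠ [] := by
      intro i; by_cases h : i % 2 = 0 <;> simp [hM, h, hLne]
    set B : ℕ → List (Perm (Fin (n + 1))) := fun i => (M i).map (f i) with hB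
    have hBne : ∀ i, B i ≠ [] := fun i => by simp [hB, hMne i]
    have hlenM : ∀ i, (M i).length = n ! := by
      intro i; by_cases h : i % 2 = 0 <;> simp [hM, h, hlen]
    have hmemB : ∀ i (τ : Perm (Fin (n+1))), τ ∈ B i → τ⁻¹ (Fin.last n) = v n i := by
      intro i τ hτ
      obtain ⟨h, _, rfl⟩ := List.mem_map.mp hτ
      have hinv : (emb h)⁻¹ (Fin.last n) = Fin.last n := by
        rw [Perm.inv_eq_iff_eq, emb_last]
      rw [hf]
      simp only [mul_inv_rev, Perm.mul_apply, hinv, r_inv_last]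
    refine ⟨(List.range (n + 1)).flatMap B, ?_, ?_, ?_, ?_, ?_⟩
    · rw [List.length_flatMap]
      have hrep : (List.range (n + 1)).map (List.length ∘ B) =
          List.replicate (n + 1) (n !) := by
        refine List.eq_replicate_iff.mpr ⟨by simp, ?_⟩
        intro b hb
        obtain ⟨i, _, rfl⟩ := List.mem_map.mp hb
        simp [hB, hlenM i]
      rw [show (fun a => (B a).length) = List.length ∘ B from rfl, hrep, List.sum_replicate, smul_eq_mul, Nat.factorial_succ]
    · rw [List.range_succ_eq_map, List.flatMap_cons,
        List.head?_append_of_ne_nil _ (hBne 0)]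
      have : M 0 = L := by simp [hM]
      rw [hB, List.head?_map, this, hhead]
      simp [hf, emb_one, r]
    · rw [List.nodup_flatMap]
      constructor
      · intro i _
        refine List.Nodup.map ?_ ?_
        · intro a b hab
          exact emb_injective (mul_right_cancel hab)
        · by_cases h : i % 2 = 0 <;> simp [hM, h, hnodup]
      · refine List.Pairwise.imp_of_mem ?_ (List.pairwise_lt_range (n := n + 1))
        intro i j hi hj hij τ hτi hτj
        have h1 := hmemB i τ hτi
        have h2 := hmemB j τ hτj
        have hi' : i < n + 1 := List.mem_range.mp hi
        have hj' : j < n + 1 := List.mem_range.mp hj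
        have : v n i = v n j := h1 ▸ h2 ▸ rfl
        have := congrArg Fin.val this
        simp only [v] at this
        omega
    · intro τ
      rw [List.mem_flatMap]
      set k : ℕ := (τ⁻¹ (Fin.last n) : ℕ) with hk
      have hkn : k ≤ n := Nat.lt_succ_iff.mp (τ⁻¹ (Fin.last n)).isLt
      refine ⟨n - k, List.mem_range.mpr (by omega), ?_⟩
      have hv : v n (n - k) = τ⁻¹ (Fin.last n) := by
        apply Fin.ext; simp only [v]; omega
      have hfix : (τ * (r n (n - k))⁻¹) (Fin.last n) = Fin.last n := by
        rw [Perm.mul_apply, r_inv_last, hv, ← Perm.mul_apply, mul_inv_cancel, Perm.one_apply]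
      obtain ⟨σ, hσ⟩ := emb_surj _ hfix
      have hτ : τ = f (n - k) σ := by
        rw [hf]; dsimp only; rw [hσ, inv_mul_cancel_right]
      refine List.mem_map.mpr ⟨σ, ?_, hτ.symm⟩
      by_cases h : (n - k) % 2 = 0 <;> simp [hM, h, hmem σ]
    · have hstep : ∀ i (a b : Perm (Fin n)), (∃ t, t.IsSwap ∧ b = t * a) →
          ∃ s : Perm (Fin (n+1)), s.IsSwap ∧ f i b = s * f i a := by
        rintro i a b ⟨t, ht, rfl⟩
        exact ⟨emb t, emb_isSwap ht, by rw [hf]; dsimp only; rw [emb_mul, mul_assoc]⟩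
      have hstep' : ∀ i (a b : Perm (Fin n)), (∃ t, t.IsSwap ∧ b = t * a) →
          ∃ s : Perm (Fin (n+1)), s.IsSwap ∧ f i a = s * f i b := by
        rintro i a b ⟨t, ht, rfl⟩
        refine hstep i (t * a) a ⟨t, ht, ?_⟩
        obtain ⟨x, y, hxy, rfl⟩ := ht
        rw [← mul_assoc, swap_mul_self, one_mul]
      have hflat : (List.range (n + 1)).flatMap B = ((List.range (n + 1)).map B).flatten :=
        rfl
      rw [hflat, List.Chain', List.isChain_flatten]
      · constructor
        · intro l hl
          obtain ⟨i, _, rfl⟩ := List.mem_map.mp hl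
          rw [hB]
          rw [List.isChain_map]
          by_cases h : i % 2 = 0
          · have : M i = L := by simp [hM, h]
            rw [this]
            exact hchain.imp (hstep i)
          · have : M i = L.reverse := by simp [hM, h]
            rw [this, List.isChain_reverse]
            exact hchain.imp fun a b hab => hstep' i a b hab
        · rw [List.isChain_map]
          refine (List.isChain_range_succ _ n).mpr ?_
          intro m hm x hx y hy
          set g : Perm (Fin n) := (M m).getLast (hMne m) with hg
          have hgl : (M m).getLast? = some g := List.getLast?_eq_getLast (hMne m)
          have hlink : (M (m + 1)).head? = (M m).getLast? := by
            rcases Nat.mod_two_eq_zero_or_one m with h | h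
            · have h1 : (m + 1) % 2 = 1 := by omega
              simp [hM, h, h1, List.head?_reverse]
            · have h1 : (m + 1) % 2 = 0 := by omega
              simp [hM, h, h1, List.getLast?_reverse]
          rw [hB, List.getLast?_map, hgl] at hx
          rw [hB, List.head?_map, hlink, hgl] at hy
          simp only [Option.map_some, Option.mem_def, Option.some.injEq] at hx hy
          subst hx; subst hy
          set π : Perm (Fin (n + 1)) := f m g with hπ
          have hne : π (v n (m + 1)) ≠ π (v n m) := by
            refine π.injective.ne ?_
            intro hvv
            have := congrArg Fin.val hvv
            simp only [v] at this
            omega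
          refine ⟨swap (π (v n (m + 1))) (π (v n m)), ⟨_, _, hne, rfl⟩, ?_⟩
          rw [swap_apply_apply, hπ, hf]
          dsimp only
          rw [show r n (m + 1) = r n m * swap (v n (m + 1)) (v n m) from rfl]
          group
      · intro hcon
        obtain ⟨i, _, hBi⟩ := List.mem_map.mp hcon
        exact hBne i hBi

end PermGrayAux

theorem perm_gray_code (n : ℕ) (hn : 1 ≤ n) :
    ∃ L : List (Equiv.Perm (Fin n)),
      L.length = n ! ∧
      L.head? = some 1 ∧
      L.Nodup ∧
      (∀ σ : Equiv.Perm (Fin n), σ ∈ L) ∧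
      L.Chain' (fun a b => ∃ t : Equiv.Perm (Fin n), t.IsSwap ∧ b = t * a) := by
  exact PermGrayAux.aux n
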